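/- arXiv:0804.2564 — 4 statements merged into one kernel-verified Lean document; each statement's English description precedes it below -/
import Mathlib

section
/- The Stokes multipliers s₁ = (e^{(Θ∞-Θ)πi} - e^{-(Θ∞-Θ)πi})e^{Θ∞πi}, s₂ = e^{-Θπi}, s₃ = -(e^{(Θ∞+Θ)πi} - e^{-(Θ∞+Θ)πi})e^{-Θ∞πi}, s₄ = -e^{(2Θ∞+Θ)πi} satisfy the cyclic relation (1 + s₂s₃)e^{2πiΘ∞} + [s₁s₄ + (1 + s₃s₄)(1 + s₁s₂)]e^{-2πiΘ∞} = 2cos(2πΘ) for all real Θ, Θ∞. -/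
open Complex

theorem stokes_cyclic_relation (Θ Θinf : ℝ) :
    let E : ℝ → ℂ := fun t => Complex.exp ((t : ℂ) * (Real.pi : ℂ) * Complex.I)
    let s₁ : ℂ := (E (Θinf - Θ) - E (-(Θinf - Θ))) * E Θinf
    let s₂ : ℂ := E (-Θ)
    let s₃ : ℂ := -(E (Θinf + Θ) - E (-(Θinf + Θ))) * E (-Θinf)
    let s₄ : ℂ := -E (2 * Θinf + Θ)
    (1 + s₂ * s₃) * Complex.exp (2 * (Real.pi : ℂ) * Complex.I * (Θinf : ℂ)) +
      (s₁ * s₄ + (1 + s₃ * s₄) * (1 + s₁ * s₂)) *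
        Complex.exp (-(2 * (Real.pi : ℂ) * Complex.I * (Θinf : ℂ))) =
    2 * Complex.cos (2 * (Real.pi : ℂ) * (Θ : ℂ)) := by
  intro E s₁ s₂ s₃ s₄
  simp only [E, s₁, s₂, s₃, s₄]
  set a : ℂ := (Θ : ℂ) * (Real.pi : ℂ) * Complex.I with ha
  set b : ℂ := (Θinf : ℂ) * (Real.pi : ℂ) * Complex.I with hb
  have e1 : ((Θinf - Θ : ℝ) : ℂ) * (Real.pi : ℂ) * Complex.I = b - a := by
    rw [ha, hb]; push_cast; ring
  have e2 : ((-(Θinf - Θ) : ℝ) : ℂ) * (Real.pi : ℂ) * Complex.I = -(b - a) := by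
    rw [ha, hb]; push_cast; ring
  have e3 : ((-Θ : ℝ) : ℂ) * (Real.pi : ℂ) * Complex.I = -a := by
    rw [ha]; push_cast; ring
  have e4 : ((Θinf + Θ : ℝ) : ℂ) * (Real.pi : ℂ) * Complex.I = b + a := by
    rw [ha, hb]; push_cast; ring
  have e5 : ((-(Θinf + Θ) : ℝ) : ℂ) * (Real.pi : ℂ) * Complex.I = -(b + a) := by
    rw [ha, hb]; push_cast; ring
  have e6 : ((-Θinf : ℝ) : ℂ) * (Real.pi : ℂ) * Complex.I = -b := by
    rw [hb]; push_cast; ring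
  have e7 : ((2 * Θinf + Θ : ℝ) : ℂ) * (Real.pi : ℂ) * Complex.I = b + b + a := by
    rw [ha, hb]; push_cast; ring
  have e8 : 2 * (Real.pi : ℂ) * Complex.I * (Θinf : ℂ) = b + b := by
    rw [hb]; ring
  have e9 : 2 * (Real.pi : ℂ) * (Θ : ℂ) * Complex.I = a + a := by
    rw [ha]; ring
  rw [e1, e2, e3, e4, e5, e6, e7, e8, Complex.two_cos,
    show (2 * (Real.pi : ℂ) * (Θ : ℂ)) * Complex.I = a + a by rw [ha]; ring,
    show -(2 * (Real.pi : ℂ) * (Θ : ℂ)) * Complex.I = -(a + a) by rw [ha]; ring]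
  simp only [Complex.exp_add, Complex.exp_sub, Complex.exp_neg]
  have hA : Complex.exp a ≠ 0 := Complex.exp_ne_zero a
  have hB : Complex.exp b ≠ 0 := Complex.exp_ne_zero b
  revert hA hB
  generalize Complex.exp a = A
  generalize Complex.exp b = B
  intro hA hB
  have h : A * B * (B * A * B * (A * B * A)) * (B * B) ≠ 0 := by
    apply_rules [mul_ne_zero]
  field_simp
  ring
end

section
/- With Θ = -b, Θ∞ = ν + b, the specific Stokes multipliers s₁ = e^{(2ν+3b)πi} - e^{-bπi}, s₂ = e^{bπi}, s₃ = e^{-(2ν+b)πi} - e^{-bπi}, s₄ = -e^{(2ν+b)πi} satisfy (1 + s₂s₃)e^{2πiΘ∞} + [s₁s₄ + (1 + s₃s₄)(1 + s₁s₂)]e^{-2πiΘ∞} = 2cos(2πΘ). -/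
open Complex

theorem special_stokes_satisfy_relation (b ν : ℝ) :
    let E : ℝ → ℂ := fun t => Complex.exp ((t : ℂ) * (Real.pi : ℂ) * Complex.I)
    let Θ : ℝ := -b
    let Θinf : ℝ := ν + b
    let s₁ : ℂ := E (2 * ν + 3 * b) - E (-b)
    let s₂ : ℂ := E b
    let s₃ : ℂ := E (-(2 * ν + b)) - E (-b)
    let s₄ : ℂ := -E (2 * ν + b)
    (1 + s₂ * s₃) * Complex.exp (2 * (Real.pi : ℂ) * Complex.I * (Θinf : ℂ)) +
      (s₁ * s₄ + (1 + s₃ * s₄) * (1 + s₁ * s₂)) *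
        Complex.exp (-(2 * (Real.pi : ℂ) * Complex.I * (Θinf : ℂ))) =
    2 * Complex.cos (2 * (Real.pi : ℂ) * (Θ : ℂ)) := by
  intro E Θ Θinf s₁ s₂ s₃ s₄
  set x := Complex.exp ((b : ℂ) * Real.pi * Complex.I) with hx
  set y := Complex.exp ((ν : ℂ) * Real.pi * Complex.I) with hy
  have hx0 : x ≠ 0 := Complex.exp_ne_zero _
  have hy0 : y ≠ 0 := Complex.exp_ne_zero _
  have key : ∀ (m n : ℤ), Complex.exp (((m * ν + n * b : ℝ) : ℂ) * Real.pi * Complex.I)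
      = y ^ m * x ^ n := by
    intro m n
    rw [hx, hy, ← Complex.exp_int_mul, ← Complex.exp_int_mul, ← Complex.exp_add]
    congr 1
    push_cast
    ring
  have e1 : s₁ = y ^ (2:ℤ) * x ^ (3:ℤ) - y ^ (0:ℤ) * x ^ (-1:ℤ) := by
    show E (2 * ν + 3 * b) - E (-b) = _
    rw [show E (2 * ν + 3 * b) = Complex.exp (((2 * ν + 3 * b : ℝ) : ℂ) * Real.pi * Complex.I) from rfl,
      show E (-b) = Complex.exp (((-b : ℝ) : ℂ) * Real.pi * Complex.I) from rfl,
      show ((2 * ν + 3 * b : ℝ)) = ((2:ℤ) * ν + (3:ℤ) * b : ℝ) by push_cast; ring,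
      show ((-b : ℝ)) = ((0:ℤ) * ν + (-1:ℤ) * b : ℝ) by push_cast; ring,
      key, key]
  have e2 : s₂ = x := by
    show E b = x
    rw [hx]
  have e3 : s₃ = y ^ (-2:ℤ) * x ^ (-1:ℤ) - y ^ (0:ℤ) * x ^ (-1:ℤ) := by
    show E (-(2 * ν + b)) - E (-b) = _
    rw [show E (-(2 * ν + b)) = Complex.exp (((-(2 * ν + b) : ℝ) : ℂ) * Real.pi * Complex.I) from rfl,
      show E (-b) = Complex.exp (((-b : ℝ) : ℂ) * Real.pi * Complex.I) from rfl,
      show ((-(2 * ν + b) : ℝ)) = ((-2:ℤ) * ν + (-1:ℤ) * b : ℝ) by push_cast; ring,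
      show ((-b : ℝ)) = ((0:ℤ) * ν + (-1:ℤ) * b : ℝ) by push_cast; ring,
      key, key]
  have e4 : s₄ = -(y ^ (2:ℤ) * x ^ (1:ℤ)) := by
    show -E (2 * ν + b) = _
    rw [show E (2 * ν + b) = Complex.exp (((2 * ν + b : ℝ) : ℂ) * Real.pi * Complex.I) from rfl,
      show ((2 * ν + b : ℝ)) = ((2:ℤ) * ν + (1:ℤ) * b : ℝ) by push_cast; ring,
      key]
  have einf : Complex.exp (2 * (Real.pi : ℂ) * Complex.I * (Θinf : ℂ)) = y ^ (2:ℤ) * x ^ (2:ℤ) := by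
    rw [show (2 * (Real.pi : ℂ) * Complex.I * (Θinf : ℂ)) = ((2 * ν + 2 * b : ℝ) : ℂ) * Real.pi * Complex.I by
        push_cast [Θinf]; ring,
      show ((2 * ν + 2 * b : ℝ)) = ((2:ℤ) * ν + (2:ℤ) * b : ℝ) by push_cast; ring,
      key]
  have einf' : Complex.exp (-(2 * (Real.pi : ℂ) * Complex.I * (Θinf : ℂ))) = y ^ (-2:ℤ) * x ^ (-2:ℤ) := by
    rw [show (-(2 * (Real.pi : ℂ) * Complex.I * (Θinf : ℂ))) = ((-2 * ν + -2 * b : ℝ) : ℂ) * Real.pi * Complex.I by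
        push_cast [Θinf]; ring,
      show ((-2 * ν + -2 * b : ℝ)) = ((-2:ℤ) * ν + (-2:ℤ) * b : ℝ) by push_cast; ring,
      key]
  have ecos : 2 * Complex.cos (2 * (Real.pi : ℂ) * (Θ : ℂ)) = y ^ (0:ℤ) * x ^ (-2:ℤ) + y ^ (0:ℤ) * x ^ (2:ℤ) := by
    rw [Complex.cos, show (2 * (Real.pi : ℂ) * (Θ : ℂ)) * Complex.I = ((0 * ν + -2 * b : ℝ) : ℂ) * Real.pi * Complex.I by
        push_cast [Θ]; ring,
      show ((-(2 * (Real.pi : ℂ) * (Θ : ℂ))) * Complex.I) = ((0 * ν + 2 * b : ℝ) : ℂ) * Real.pi * Complex.I by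
        push_cast [Θ]; ring]
    rw [show ((0 * ν + -2 * b : ℝ)) = ((0:ℤ) * ν + (-2:ℤ) * b : ℝ) by push_cast; ring,
      show ((0 * ν + 2 * b : ℝ)) = ((0:ℤ) * ν + (2:ℤ) * b : ℝ) by push_cast; ring,
      key, key]
    ring
  rw [e1, e2, e3, e4, einf, einf', ecos]
  simp only [zpow_neg, zpow_two, zpow_zero, zpow_one, show ((3:ℤ))=(3:ℕ) from rfl, zpow_natCast]
  field_simp
  ring_nf
end

section
/- As n → ∞, φ_n(z) := (1/2)∫_{β_{1,n}}^z (R_n(s)/s) ds converges to (1/2)(z - 1 - log z) uniformly on compact subsets of ℂ \ ((-∞,0] ∪ {0}), where R_n(z) = √((z-β_{1,n})(z-β_{2,n})) with R_n(z) ~ z at ∞, β_{1,n} = 1 + ν/n - 2√(ν/n), β_{2,n} = 1 + ν/n + 2√(ν/n), and ν > 0 is fixed. -/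
open Filter Topology

set_option maxHeartbeats 1600000


private lemma mySqrtBound {A D : ℝ} (hA : 0 ≤ A) (hD : 0 ≤ D) (h : A^2 ≤ D^2) : A ≤ D := by
  nlinarith

private lemma myArithBeta {t : ℝ} (h1 : 0 < t) (h2 : t ≤ 1/4) :
    1/2 ≤ 1 + t^2 - 2*t ∧ 1 + t^2 - 2*t < 1 := by
  constructor <;> nlinarith

private lemma myArithAbs {t r : ℝ} (ht0 : 0 < t) (ht : t ≤ 1/4)
    (h1 : 1 + t^2 - 2*t ≤ r) (h2 : r ≤ 1 + t^2 + 2*t) : |r - 1| ≤ 3*t := by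
  rw [abs_le]; constructor <;> nlinarith

private lemma myArithAbs2 {t : ℝ} (ht0 : 0 < t) (ht : t ≤ 1/4) :
    |1 - (1 + t^2 - 2*t)| ≤ 3*t ∧ |1 - (1 + t^2 + 2*t)| ≤ 3*t := by
  constructor <;> (rw [abs_le]; constructor <;> nlinarith)

private lemma myArithE {t n : ℝ} (hn : 0 ≤ n) (ht0 : 0 < t) (ht : t ≤ 1/4) :
    |(-2*t^2 : ℝ)| * n + |(t^4 - 2*t^2 : ℝ)| ≤ 2*t^2*(n+2) := by
  have ha : |(-2*t^2 : ℝ)| = 2*t^2 := by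
    rw [abs_of_nonpos (by nlinarith)]; ring
  have ht2 : t^2 ≤ 1 := by nlinarith
  have hb : |(t^4 - 2*t^2 : ℝ)| ≤ 2*t^2 := by
    rw [abs_le]
    constructor <;> nlinarith [sq_nonneg (t^2), sq_nonneg t]
  rw [ha]; nlinarith

private lemma myArithMono {t p q : ℝ} (h : p ≤ q) : 2*t^2*p ≤ 2*t^2*q := by
  nlinarith [sq_nonneg t]

private lemma myArithNeq {M t a : ℝ} (hM : 1 ≤ M) (ht0 : 0 < t) (ht : t ≤ 1/4)
    (hz : (M+7)*t < a) (hq : a*a ≤ 2*t^2*(a+3)) : False := by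
  have h8 : 8*t ≤ (M+7)*t := by nlinarith
  nlinarith [mul_lt_mul_of_pos_left hz ht0, mul_pos ht0 (lt_of_le_of_lt (by nlinarith : (0:ℝ) ≤ 8*t) (lt_of_le_of_lt h8 hz))]

private lemma myArithCase2 {X M t : ℝ} (hX : 0 ≤ X) (hM : 1 ≤ M) (ht : 0 < t)
    (h : X^2 ≤ 2*t^2*(M+2)) : X ≤ 2*((M+7)*t) + 3*t := by
  have h1 : X ≤ (M+2)*t := by
    apply mySqrtBound hX (by nlinarith)
    nlinarith
  nlinarith

private lemma myPreconn (c : ℂ) (r : ℝ) (hr : 0 < r) :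
    IsPreconnected {z : ℂ | r < ‖z - c‖} := by
  have hrank : 1 < Module.rank ℝ ℂ := by
    rw [Complex.rank_real_complex]; exact Nat.one_lt_ofNat
  have hs : IsPreconnected ((Set.Ioi r) ×ˢ (Metric.sphere (0:ℂ) 1)) :=
    isPreconnected_Ioi.prod (isPreconnected_sphere hrank 0 1)
  have himg : {z : ℂ | r < ‖z - c‖} =
      (fun p : ℝ × ℂ => c + p.1 • p.2) '' ((Set.Ioi r) ×ˢ (Metric.sphere (0:ℂ) 1)) := by
    ext z
    simp only [Set.mem_image, Set.mem_setOf_eq, Set.mem_prod, Set.mem_Ioi,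
      mem_sphere_iff_norm, sub_zero, Prod.exists]
    constructor
    · intro hz
      have hz0 : z - c ≠ 0 := by
        intro h; rw [h] at hz; simp at hz; linarith
      refine ⟨‖z - c‖, ‖z - c‖⁻¹ • (z - c), ⟨hz, ?_⟩, ?_⟩
      · rw [norm_smul, norm_inv, norm_norm, inv_mul_cancel₀ (norm_ne_zero_iff.2 hz0)]
      · rw [smul_smul, mul_inv_cancel₀ (norm_ne_zero_iff.2 hz0), one_smul]
        ring
    · rintro ⟨t, u, ⟨ht, hu⟩, rfl⟩
      simp [norm_smul, hu, abs_of_pos (lt_trans hr ht), ht]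
  rw [himg]
  exact hs.image _ (by fun_prop)

private lemma myBranch {R : ℂ → ℂ} {δ : ℝ} (hδ : 0 < δ)
    (hcont : ∀ z : ℂ, δ < ‖z - 1‖ → ContinuousAt R z)
    (hne : ∀ z : ℂ, δ < ‖z - 1‖ → ‖R z - (z - 1)‖ ≠ ‖R z + (z - 1)‖)
    {x : ℂ} (hx : δ < ‖x - 1‖) (hxA : ‖R x - (x - 1)‖ < ‖R x + (x - 1)‖)
    {s : ℂ} (hs : δ < ‖s - 1‖) :
    ‖R s - (s - 1)‖ < ‖R s + (s - 1)‖ := by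
  set Ω : Set ℂ := {z : ℂ | δ < ‖z - 1‖} with hΩ
  set A : Set ℂ := {z : ℂ | δ < ‖z - 1‖ ∧ ‖R z - (z - 1)‖ < ‖R z + (z - 1)‖} with hA
  set B : Set ℂ := {z : ℂ | δ < ‖z - 1‖ ∧ ‖R z + (z - 1)‖ < ‖R z - (z - 1)‖} with hB
  have hAopen : IsOpen A := by
    rw [isOpen_iff_mem_nhds]
    intro z hz
    have hc := hcont z hz.1
    have h1 : ∀ᶠ w in 𝓝 z, δ < ‖w - 1‖ := by
      have : ContinuousAt (fun w : ℂ => ‖w - 1‖) z := by fun_prop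
      exact (continuousAt_const.eventually_lt this hz.1)
    have h2 : ∀ᶠ w in 𝓝 z, ‖R w - (w - 1)‖ < ‖R w + (w - 1)‖ := by
      have hf : ContinuousAt (fun w : ℂ => ‖R w - (w - 1)‖) z :=
        (hc.sub (by fun_prop)).norm
      have hg : ContinuousAt (fun w : ℂ => ‖R w + (w - 1)‖) z :=
        (hc.add (by fun_prop)).norm
      exact hf.eventually_lt hg hz.2
    filter_upwards [h1, h2] with w hw1 hw2
    exact ⟨hw1, hw2⟩
  have hBopen : IsOpen B := by
    rw [isOpen_iff_mem_nhds]
    intro z hz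
    have hc := hcont z hz.1
    have h1 : ∀ᶠ w in 𝓝 z, δ < ‖w - 1‖ := by
      have : ContinuousAt (fun w : ℂ => ‖w - 1‖) z := by fun_prop
      exact (continuousAt_const.eventually_lt this hz.1)
    have h2 : ∀ᶠ w in 𝓝 z, ‖R w + (w - 1)‖ < ‖R w - (w - 1)‖ := by
      have hf : ContinuousAt (fun w : ℂ => ‖R w + (w - 1)‖) z :=
        (hc.add (by fun_prop)).norm
      have hg : ContinuousAt (fun w : ℂ => ‖R w - (w - 1)‖) z :=
        (hc.sub (by fun_prop)).norm
      exact hf.eventually_lt hg hz.2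
    filter_upwards [h1, h2] with w hw1 hw2
    exact ⟨hw1, hw2⟩
  have hdisj : Disjoint A B := by
    rw [Set.disjoint_left]
    rintro z ⟨_, h1⟩ ⟨_, h2⟩
    exact absurd h1 (not_lt.mpr h2.le)
  have hcover : Ω ⊆ A ∪ B := by
    intro z hz
    rcases lt_or_gt_of_ne (hne z hz) with h | h
    · exact Or.inl ⟨hz, h⟩
    · exact Or.inr ⟨hz, h⟩
  have hconn : IsPreconnected Ω := myPreconn 1 δ hδ
  have hsub := hconn.subset_left_of_subset_union hAopen hBopen hdisj hcover ⟨x, hx, hx, hxA⟩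
  exact (hsub hs).2

theorem phase_function_uniform_limit (ν : ℝ) (hν : 0 < ν)
    (β₁ β₂ : ℕ → ℝ)
    (hβ₁ : ∀ n : ℕ, β₁ n = 1 + ν / n - 2 * Real.sqrt (ν / n))
    (hβ₂ : ∀ n : ℕ, β₂ n = 1 + ν / n + 2 * Real.sqrt (ν / n))
    (R φ : ℕ → ℂ → ℂ)
    (hRsq : ∀ (n : ℕ) (z : ℂ), R n z ^ 2 = (z - (β₁ n : ℂ)) * (z - (β₂ n : ℂ)))
    (hRan : ∀ (n : ℕ) (z : ℂ), ¬(z.im = 0 ∧ β₁ n ≤ z.re ∧ z.re ≤ β₂ n) →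
      AnalyticAt ℂ (R n) z)
    (hRnorm : ∀ n : ℕ, Tendsto (fun x : ℝ => R n (x : ℂ) / (x : ℂ)) atTop (𝓝 1))
    (S : ℕ → Set ℂ)
    (hS : ∀ n : ℕ, S n = {z : ℂ | z.im ≠ 0 ∨ (0 < z.re ∧ z.re < β₁ n)})
    (hφderiv : ∀ n : ℕ, ∀ z ∈ S n, HasDerivAt (φ n) (R n z / (2 * z)) z)
    (hφ0 : ∀ n : ℕ, Tendsto (φ n) (𝓝[S n] (β₁ n : ℂ)) (𝓝 0))
    (K : Set ℂ) (hK : IsCompact K) (hKS : ∀ n : ℕ, K ⊆ S n) :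
    TendstoUniformlyOn (fun n z => φ n z)
      (fun z => (z - 1 - Complex.log z) / 2) atTop K := by
  classical
  set ψ : ℂ → ℂ := fun z => (z - 1 - Complex.log z) / 2 with hψdef
  rw [Metric.tendstoUniformlyOn_iff]
  intro ε hε
  rcases K.eq_empty_or_nonempty with rfl | hKne
  · simp
  -- bound M on K
  obtain ⟨M, hM1, hMK⟩ : ∃ M : ℝ, 1 ≤ M ∧ ∀ z ∈ K, ‖z‖ ≤ M := by
    obtain ⟨r, hr⟩ := hK.isBounded.subset_closedBall 0
    exact ⟨max r 1, le_max_right _ _, fun z hz =>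
      (mem_closedBall_zero_iff.1 (hr hz)).trans (le_max_left _ _)⟩
  -- lower bound k on norms of segment points
  obtain ⟨k, hk0, hk⟩ : ∃ k > 0, ∀ (θ w : ℝ) (z : ℂ), θ ∈ Set.Icc (0:ℝ) 1 →
      w ∈ Set.Icc (1/4:ℝ) 1 → z ∈ K →
      k ≤ ‖((1 - θ : ℝ) : ℂ) * (w : ℂ) + (θ : ℂ) * z‖ := by
    set g : ℝ × ℝ × ℂ → ℝ := fun p => ‖((1 - p.1 : ℝ) : ℂ) * (p.2.1 : ℂ) + (p.1 : ℂ) * p.2.2‖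
      with hg
    have hP : IsCompact ((Set.Icc (0:ℝ) 1) ×ˢ ((Set.Icc (1/4:ℝ) 1) ×ˢ K)) :=
      isCompact_Icc.prod (isCompact_Icc.prod hK)
    obtain ⟨z₀, hz₀⟩ := hKne
    have hPne : ((Set.Icc (0:ℝ) 1) ×ˢ ((Set.Icc (1/4:ℝ) 1) ×ˢ K)).Nonempty :=
      ⟨(0, 1, z₀), by
        constructor
        · exact ⟨le_refl _, zero_le_one⟩
        · exact ⟨⟨by norm_num, le_refl _⟩, hz₀⟩⟩
    have hgc : ContinuousOn g ((Set.Icc (0:ℝ) 1) ×ˢ ((Set.Icc (1/4:ℝ) 1) ×ˢ K)) :=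
      (Continuous.norm (by fun_prop)).continuousOn
    obtain ⟨p₀, hp₀P, hp₀min⟩ := hP.exists_isMinOn hPne hgc
    refine ⟨g p₀, ?_, ?_⟩
    · rcases le_iff_lt_or_eq.mp (show (0:ℝ) ≤ g p₀ from norm_nonneg _) with h | h
      · exact h
      · exfalso
        obtain ⟨θ, w, z⟩ := p₀
        have h0 : ((1 - θ : ℝ) : ℂ) * (w : ℂ) + (θ : ℂ) * z = 0 := by
          have := h.symm
          simpa [hg, norm_eq_zero] using this
        obtain ⟨hθ, hw, hzK⟩ : θ ∈ Set.Icc (0:ℝ) 1 ∧ w ∈ Set.Icc (1/4:ℝ) 1 ∧ z ∈ K := by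
          simpa [Set.mem_prod] using hp₀P
        have him : θ * z.im = 0 := by
          have := congrArg Complex.im h0
          simpa using this
        have hre : (1 - θ) * w + θ * z.re = 0 := by
          have := congrArg Complex.re h0
          simpa using this
        have hzS := hKS 0 hzK
        rw [hS 0] at hzS
        have hβ10 : β₁ 0 = 1 := by simp [hβ₁ 0]
        rcases eq_or_lt_of_le hθ.1 with hθ0 | hθpos
        · rw [← hθ0] at hre; simp at hre; linarith [hw.1]
        · have hzim : z.im = 0 := by
            rcases mul_eq_zero.1 him with h | h
            · linarith
            · exact h
          rcases hzS with h | h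
          · exact h hzim
          · rw [hβ10] at h
            have h1 : 0 < θ * z.re := mul_pos hθpos h.1
            have h2 : 0 ≤ (1 - θ) * w := mul_nonneg (by linarith [hθ.2]) (by linarith [hw.1])
            linarith
    · intro θ w z hθ hw hz
      exact isMinOn_iff.mp hp₀min (θ, w, z) (Set.mem_prod.2 ⟨hθ, Set.mem_prod.2 ⟨hw, hz⟩⟩)
  -- continuity of ψ at 1
  obtain ⟨η, hη0, hηball⟩ : ∃ η > 0, ∀ w : ℂ, dist w 1 < η → ‖ψ w‖ < ε/3 := by
    have hψc : ContinuousAt ψ 1 := by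
      have hlog : ContinuousAt Complex.log 1 :=
        continuousAt_clog (by simp [Complex.mem_slitPlane_iff])
      exact ((continuousAt_id.sub continuousAt_const).sub hlog).div_const 2
    have hψ1 : ψ 1 = 0 := by simp [hψdef, Complex.log_one]
    obtain ⟨η, hη, h⟩ := Metric.continuousAt_iff.1 hψc (ε/3) (by positivity)
    refine ⟨η, hη, fun w hw => ?_⟩
    have := h hw
    rwa [hψ1, dist_zero_right] at this
  -- constant C₂ and the threshold τ
  set C₂ : ℝ := (2*(M+7)+3)*(M+1)/(2*k) with hC₂
  have hC₂0 : 0 ≤ C₂ := by positivity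
  set τ : ℝ := min (1/4) (min (η/6) ((ε/3)/(C₂+1))) with hτ
  have hτ0 : 0 < τ := by
    apply lt_min (by norm_num)
    exact lt_min (by positivity) (by positivity)
  -- t tends to 0
  have ht0 : Tendsto (fun n : ℕ => Real.sqrt (ν / n)) atTop (𝓝 0) := by
    have h1 : Tendsto (fun n : ℕ => ν / n) atTop (𝓝 0) := tendsto_const_div_atTop_nhds_zero_nat ν
    have h2 := (Real.continuous_sqrt.tendsto 0).comp h1
    rw [show Real.sqrt 0 = 0 from Real.sqrt_zero] at h2
    exact h2
  have hev1 : ∀ᶠ n : ℕ in atTop, Real.sqrt (ν / n) < τ := by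
    have := Metric.tendsto_nhds.1 ht0 τ hτ0
    filter_upwards [this] with n hn
    rw [Real.dist_eq, sub_zero] at hn
    calc Real.sqrt (ν / n) ≤ |Real.sqrt (ν / n)| := le_abs_self _
    _ < τ := hn
  filter_upwards [hev1, eventually_ge_atTop 1] with n htn hn1
  -- now fix n
  set t : ℝ := Real.sqrt (ν / n) with htdef
  have hnpos : (0:ℝ) < n := by exact_mod_cast hn1
  have htpos : 0 < t := Real.sqrt_pos.2 (div_pos hν hnpos)
  have htsq : t^2 = ν / n := Real.sq_sqrt (le_of_lt (div_pos hν hnpos))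
  have ht4 : t ≤ 1/4 := le_of_lt (lt_of_lt_of_le htn (min_le_left _ _))
  have htη : t < η/6 := lt_of_lt_of_le htn ((min_le_right _ _).trans (min_le_left _ _))
  have htε : t < (ε/3)/(C₂+1) := lt_of_lt_of_le htn ((min_le_right _ _).trans (min_le_right _ _))
  have hβ1n : β₁ n = 1 + t^2 - 2*t := by rw [hβ₁ n, htsq]
  have hβ2n : β₂ n = 1 + t^2 + 2*t := by rw [hβ₂ n, htsq]
  have hβ1lb : 1/2 ≤ β₁ n := by rw [hβ1n]; exact (myArithBeta htpos ht4).1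
  have hβ1ub : β₁ n < 1 := by rw [hβ1n]; exact (myArithBeta htpos ht4).2
  set δ : ℝ := (M+7)*t with hδdef
  have hδpos : 0 < δ := by positivity
  have h3tδ : 3*t ≤ δ := by
    rw [hδdef]
    have : (3:ℝ) ≤ M + 7 := by linarith
    exact mul_le_mul_of_nonneg_right this htpos.le
  -- continuity of R n off the ball around 1
  have hcont : ∀ z : ℂ, δ < ‖z - 1‖ → ContinuousAt (R n) z := by
    intro z hz
    refine (hRan n z ?_).continuousAt
    rintro ⟨him, h1, h2⟩
    have hz1 : z - 1 = ((z.re - 1 : ℝ) : ℂ) := by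
      apply Complex.ext <;> simp [him]
    rw [hz1, Complex.norm_real, Real.norm_eq_abs] at hz
    have habs : |z.re - 1| ≤ 3*t := by
      rw [hβ1n] at h1; rw [hβ2n] at h2
      exact myArithAbs htpos ht4 h1 h2
    linarith
  -- bound on the product ‖u*v‖
  have hE : ∀ z : ℂ, ‖(R n z - (z - 1)) * (R n z + (z - 1))‖ ≤ 2*t^2*(‖z‖+2) := by
    intro z
    have h1 : (R n z - (z - 1)) * (R n z + (z - 1))
        = ((-2*t^2 : ℝ) : ℂ) * z + ((t^4 - 2*t^2 : ℝ) : ℂ) := by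
      have h2 : (R n z - (z - 1)) * (R n z + (z - 1)) = R n z ^ 2 - (z - 1)^2 := by ring
      rw [h2, hRsq n z, hβ1n, hβ2n]
      push_cast
      ring
    rw [h1]
    calc ‖((-2*t^2 : ℝ) : ℂ) * z + ((t^4 - 2*t^2 : ℝ) : ℂ)‖
        ≤ ‖((-2*t^2 : ℝ) : ℂ) * z‖ + ‖((t^4 - 2*t^2 : ℝ) : ℂ)‖ := norm_add_le _ _
      _ = |(-2*t^2 : ℝ)| * ‖z‖ + |(t^4 - 2*t^2 : ℝ)| := by
          rw [norm_mul, Complex.norm_real, Complex.norm_real, Real.norm_eq_abs, Real.norm_eq_abs]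
      _ ≤ 2*t^2*(‖z‖+2) := myArithE (norm_nonneg z) htpos ht4
  -- the two norms are never equal outside the ball
  have hneq : ∀ z : ℂ, δ < ‖z - 1‖ → ‖R n z - (z - 1)‖ ≠ ‖R n z + (z - 1)‖ := by
    intro z hz heq
    have h1 : (2:ℝ) * ‖z - 1‖ ≤ ‖R n z - (z - 1)‖ + ‖R n z + (z - 1)‖ := by
      have h2 : ‖(R n z - (z - 1)) - (R n z + (z - 1))‖ ≤ ‖R n z - (z-1)‖ + ‖R n z + (z-1)‖ :=
        norm_sub_le _ _
      have h3 : (R n z - (z - 1)) - (R n z + (z - 1)) = -((2:ℂ)*(z-1)) := by ring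
      rw [h3, norm_neg] at h2
      calc (2:ℝ)*‖z-1‖ = ‖(2:ℂ)*(z-1)‖ := by
            rw [norm_mul]
            norm_num
      _ ≤ _ := h2
    rw [← heq] at h1
    have hu : ‖z - 1‖ ≤ ‖R n z - (z - 1)‖ := by linarith
    have hprod : ‖R n z - (z-1)‖ * ‖R n z + (z-1)‖ ≤ 2*t^2*(‖z‖+2) := by
      rw [← norm_mul]; exact hE z
    rw [← heq] at hprod
    have hza : ‖z‖ ≤ ‖z-1‖ + 1 := by
      calc ‖z‖ = ‖(z-1)+1‖ := by ring_nf
      _ ≤ ‖z-1‖ + ‖(1:ℂ)‖ := norm_add_le _ _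
      _ = ‖z-1‖ + 1 := by norm_num
    have hq : ‖z-1‖ * ‖z-1‖ ≤ 2*t^2*(‖z-1‖+3) := by
      have h4 : ‖z-1‖ * ‖z-1‖ ≤ ‖R n z - (z-1)‖ * ‖R n z - (z-1)‖ :=
        mul_le_mul hu hu (norm_nonneg _) (norm_nonneg _)
      have h5 : 2*t^2*(‖z‖+2) ≤ 2*t^2*(‖z-1‖+3) := myArithMono (by linarith)
      linarith
    rw [hδdef] at hz
    exact myArithNeq hM1 htpos ht4 hz hq
  -- anchor point on the real axis
  obtain ⟨x, hxd, hxge⟩ : ∃ x : ℝ, dist (R n x / x) 1 < 1/4 ∧ 2 + δ ≤ x := by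
    have h1 := Metric.tendsto_nhds.1 (hRnorm n) (1/4) (by norm_num)
    exact (h1.and (eventually_ge_atTop (2 + δ))).exists
  have hx2 : (2:ℝ) ≤ x := by linarith
  have hx0 : (x:ℂ) ≠ 0 := by
    exact_mod_cast Complex.ofReal_ne_zero.2 (by linarith : x ≠ 0)
  have hRx : ‖R n x - x‖ ≤ x/4 := by
    have h2 : R n x / x - 1 = (R n x - x) / x := by field_simp
    have h3 : dist (R n x / x) 1 = ‖R n x - (x:ℂ)‖ / x := by
      rw [dist_eq_norm, h2, norm_div, Complex.norm_real, Real.norm_eq_abs,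
        abs_of_pos (by linarith : (0:ℝ) < x)]
    rw [h3] at hxd
    have h4 := (div_lt_iff₀ (by linarith : (0:ℝ) < x)).1 hxd
    linarith
  have hxΩ : δ < ‖(x:ℂ) - 1‖ := by
    have h5 : (x:ℂ) - 1 = ((x - 1 : ℝ):ℂ) := by push_cast; ring
    rw [h5, Complex.norm_real, Real.norm_eq_abs, abs_of_pos (by linarith : (0:ℝ) < x - 1)]
    linarith
  have hxA : ‖R n x - ((x:ℂ) - 1)‖ < ‖R n x + ((x:ℂ) - 1)‖ := by
    have hu : ‖R n x - ((x:ℂ)-1)‖ ≤ x/4 + 1 := by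
      have h5 : R n x - ((x:ℂ)-1) = (R n x - x) + 1 := by ring
      rw [h5]
      calc ‖(R n x - (x:ℂ)) + 1‖ ≤ ‖R n x - (x:ℂ)‖ + ‖(1:ℂ)‖ := norm_add_le _ _
      _ ≤ x/4 + 1 := by
          have : ‖(1:ℂ)‖ = 1 := by norm_num
          linarith
    have hv : 2*x - 1 - x/4 ≤ ‖R n x + ((x:ℂ)-1)‖ := by
      have h4 : ‖(2*(x:ℂ) - 1)‖ ≤ ‖R n x + ((x:ℂ)-1)‖ + ‖R n x - (x:ℂ)‖ := by
        have h5 : (2*(x:ℂ) - 1) = (R n x + ((x:ℂ)-1)) - (R n x - (x:ℂ)) := by ring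
        rw [h5]; exact norm_sub_le _ _
      have h6 : ‖2*(x:ℂ) - 1‖ = 2*x - 1 := by
        have h7 : 2*(x:ℂ) - 1 = ((2*x - 1 : ℝ):ℂ) := by push_cast; ring
        rw [h7, Complex.norm_real, Real.norm_eq_abs, abs_of_pos (by linarith : (0:ℝ) < 2*x-1)]
      rw [h6] at h4; linarith
    calc ‖R n x - ((x:ℂ)-1)‖ ≤ x/4 + 1 := hu
    _ < 2*x - 1 - x/4 := by linarith
    _ ≤ ‖R n x + ((x:ℂ)-1)‖ := hv
  have hbranch : ∀ s : ℂ, δ < ‖s - 1‖ → ‖R n s - (s - 1)‖ < ‖R n s + (s - 1)‖ :=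
    fun s hs => myBranch hδpos hcont hneq hxΩ hxA hs
  -- choose the base point w
  set ρ : ℝ := min (η/2) (1/8) with hρdef
  have hρ0 : 0 < ρ := lt_min (by positivity) (by norm_num)
  have hρ8 : ρ ≤ 1/8 := min_le_right _ _
  have hρη : ρ ≤ η/2 := min_le_left _ _
  have hlo : β₁ n - ρ < β₁ n := by linarith
  have hcoe : Tendsto (fun x : ℝ => (x:ℂ)) (𝓝[<] (β₁ n)) (𝓝[S n] ((β₁ n : ℝ):ℂ)) := by
    rw [tendsto_nhdsWithin_iff]
    constructor
    · exact (Complex.continuous_ofReal.tendsto (β₁ n)).mono_left nhdsWithin_le_nhds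
    · have hIoo : ∀ᶠ x in 𝓝[<] (β₁ n), x ∈ Set.Ioo (β₁ n - ρ) (β₁ n) := by
        exact Filter.eventually_iff.mpr (Ioo_mem_nhdsLT hlo)
      filter_upwards [hIoo] with x hx
      rw [hS n]
      right
      constructor
      · simp only [Complex.ofReal_re]
        have := hx.1
        linarith
      · simp only [Complex.ofReal_re]
        exact hx.2
  have hφw := (hφ0 n).comp hcoe
  have hevφ : ∀ᶠ x in 𝓝[<] (β₁ n), ‖φ n ((x:ℝ):ℂ)‖ < ε/3 := by
    have h1 := Metric.tendsto_nhds.1 hφw (ε/3) (by positivity)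
    filter_upwards [h1] with x hx
    rwa [Function.comp_apply, dist_zero_right] at hx
  have hIoo2 : ∀ᶠ x in 𝓝[<] (β₁ n), x ∈ Set.Ioo (β₁ n - ρ) (β₁ n) :=
    Filter.eventually_iff.mpr (Ioo_mem_nhdsLT hlo)
  obtain ⟨w, hwIoo, hwφ⟩ := (hIoo2.and hevφ).exists
  have hw0 : (0:ℝ) < w := by
    have := hwIoo.1; linarith
  have hw14 : (1/4:ℝ) ≤ w := by
    have := hwIoo.1; linarith
  have hw1 : w ≤ 1 := by
    have := hwIoo.2; linarith
  have hwlt : w < β₁ n := hwIoo.2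
  have hψw : ‖ψ ((w:ℝ):ℂ)‖ < ε/3 := by
    apply hηball
    have h5 : ((w:ℝ):ℂ) - 1 = ((w - 1 : ℝ):ℂ) := by push_cast; ring
    rw [dist_eq_norm, h5, Complex.norm_real, Real.norm_eq_abs, abs_of_nonpos (by linarith)]
    have h6 : 1 - β₁ n ≤ 2*t := by
      rw [hβ1n]
      have := sq_nonneg t
      linarith
    have h7 : β₁ n - w < ρ := by have := hwIoo.1; linarith
    linarith
  -- the final estimate for each z ∈ K
  intro z hzK
  have hzS := hKS n hzK
  have hzM := hMK z hzK
  -- membership and size facts for segment points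
  have hsegmem : ∀ s ∈ segment ℝ ((w:ℝ):ℂ) z, (s ∈ S n ∧ k ≤ ‖s‖) ∧ ‖s‖ ≤ M := by
    rintro s hsseg
    obtain ⟨a, b, ha, hb, hab, rfl⟩ := hsseg
    have hb1 : b ≤ 1 := by linarith
    have hrepr : a • ((w:ℝ):ℂ) + b • z = ((1 - b : ℝ):ℂ) * ((w:ℝ):ℂ) + ((b:ℝ):ℂ) * z := by
      have ha1 : a = 1 - b := by linarith
      rw [ha1, Complex.real_smul, Complex.real_smul]
    rw [hrepr]
    have hsim : (((1 - b : ℝ):ℂ) * ((w:ℝ):ℂ) + ((b:ℝ):ℂ) * z).im = b * z.im := by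
      simp [Complex.add_im, Complex.mul_im]
    have hsre : (((1 - b : ℝ):ℂ) * ((w:ℝ):ℂ) + ((b:ℝ):ℂ) * z).re = (1-b) * w + b * z.re := by
      simp [Complex.add_re, Complex.mul_re]
    refine ⟨⟨?_, ?_⟩, ?_⟩
    · -- S n membership
      rw [hS n]
      by_cases hzim : z.im = 0
      · right
        have h0rez : 0 < z.re ∧ z.re < β₁ n := by
          have h9 := hzS
          rw [hS n] at h9
          rcases h9 with h | h
          · exact absurd hzim h
          · exact h
        rw [hsre]
        constructor
        · have hm1 : (1-b) * min w z.re ≤ (1-b) * w :=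
            mul_le_mul_of_nonneg_left (min_le_left _ _) (by linarith)
          have hm2 : b * min w z.re ≤ b * z.re :=
            mul_le_mul_of_nonneg_left (min_le_right _ _) hb
          have hm3 : 0 < min w z.re := lt_min hw0 h0rez.1
          linarith [hm1, hm2, hm3]
        · have hm1 : (1-b) * w ≤ (1-b) * max w z.re :=
            mul_le_mul_of_nonneg_left (le_max_left _ _) (by linarith)
          have hm2 : b * z.re ≤ b * max w z.re :=
            mul_le_mul_of_nonneg_left (le_max_right _ _) hb
          have hm3 : max w z.re < β₁ n := max_lt hwlt h0rez.2
          linarith [hm1, hm2, hm3]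
      · rcases eq_or_lt_of_le hb with hb0 | hbpos
        · right
          rw [hsre, ← hb0]
          have he0 : (1-0:ℝ)*w + 0*z.re = w := by ring
          rw [he0]
          exact ⟨hw0, hwlt⟩
        · left
          rw [hsim]
          exact mul_ne_zero (ne_of_gt hbpos) hzim
    · exact hk b w z ⟨hb, hb1⟩ ⟨hw14, hw1⟩ hzK
    · calc ‖((1 - b : ℝ):ℂ) * ((w:ℝ):ℂ) + ((b:ℝ):ℂ) * z‖
          ≤ ‖((1 - b : ℝ):ℂ) * ((w:ℝ):ℂ)‖ + ‖((b:ℝ):ℂ) * z‖ := norm_add_le _ _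
      _ = |1 - b| * |w| + |b| * ‖z‖ := by
          rw [norm_mul, norm_mul, Complex.norm_real, Complex.norm_real, Complex.norm_real,
            Real.norm_eq_abs, Real.norm_eq_abs, Real.norm_eq_abs]
      _ ≤ (1-b) * 1 + b * M := by
          rw [abs_of_nonneg (by linarith : (0:ℝ) ≤ 1 - b), abs_of_nonneg hb,
            abs_of_pos hw0]
          have := mul_le_mul_of_nonneg_left hzM hb
          have := mul_le_mul_of_nonneg_left hw1 (by linarith : (0:ℝ) ≤ 1 - b)
          linarith
      _ ≤ M := by
          have h9 : 0 ≤ (1-b)*(M-1) := mul_nonneg (by linarith) (by linarith)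
          linarith [h9]
  -- derivative of the difference on the segment
  have hder : ∀ s ∈ segment ℝ ((w:ℝ):ℂ) z,
      HasDerivWithinAt (fun u => φ n u - ψ u) ((R n s - (s-1))/(2*s)) (segment ℝ ((w:ℝ):ℂ) z) s := by
    intro s hsseg
    obtain ⟨⟨hsS, hsk⟩, _⟩ := hsegmem s hsseg
    have hs0 : s ≠ 0 := by
      intro h
      rw [h] at hsk
      simp at hsk
      linarith
    have hφd := (hφderiv n s hsS).hasDerivWithinAt (s := segment ℝ ((w:ℝ):ℂ) z)
    have hslit : s ∈ Complex.slitPlane := by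
      rw [Complex.mem_slitPlane_iff]
      rw [hS n] at hsS
      rcases hsS with h | h
      · exact Or.inr h
      · exact Or.inl h.1
    have hψd : HasDerivWithinAt ψ ((1 - s⁻¹)/2) (segment ℝ ((w:ℝ):ℂ) z) s := by
      have h1 : HasDerivAt (fun y : ℂ => (y - 1 - Complex.log y)/2) ((1 - s⁻¹)/2) s := by
        exact (((hasDerivAt_id s).sub_const 1).sub (Complex.hasDerivAt_log hslit)).div_const 2
      exact h1.hasDerivWithinAt
    have hcomb := hφd.sub hψd
    refine hcomb.congr_deriv ?_
    have hss : s * s⁻¹ = 1 := mul_inv_cancel₀ hs0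
    linear_combination (1/2 : ℂ) * hss
  -- bound on the derivative
  have hCnum : ∀ s ∈ segment ℝ ((w:ℝ):ℂ) z, ‖R n s - (s - 1)‖ ≤ 2*δ + 3*t := by
    intro s hsseg
    obtain ⟨⟨hsS, hsk⟩, hsM⟩ := hsegmem s hsseg
    rcases le_or_gt ‖s - 1‖ δ with hcase | hcase
    · have hRs : ‖R n s‖ ≤ δ + 3*t := by
        have h1 : ‖R n s‖^2 = ‖s - ((β₁ n :ℝ):ℂ)‖ * ‖s - ((β₂ n:ℝ):ℂ)‖ := by
          rw [← norm_pow, hRsq n s, norm_mul]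
        have h2 : ‖s - ((β₁ n:ℝ):ℂ)‖ ≤ δ + 3*t := by
          have he : s - ((β₁ n:ℝ):ℂ) = (s - 1) + ((1 - β₁ n : ℝ):ℂ) := by push_cast; ring
          rw [he]
          calc ‖(s - 1) + ((1 - β₁ n:ℝ):ℂ)‖ ≤ ‖s-1‖ + ‖((1 - β₁ n:ℝ):ℂ)‖ := norm_add_le _ _
          _ ≤ δ + 3*t := by
              rw [Complex.norm_real, Real.norm_eq_abs]
              have h2a : |1 - β₁ n| ≤ 3*t := by
                rw [hβ1n]; exact (myArithAbs2 htpos ht4).1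
              linarith
        have h3 : ‖s - ((β₂ n:ℝ):ℂ)‖ ≤ δ + 3*t := by
          have he : s - ((β₂ n:ℝ):ℂ) = (s - 1) + ((1 - β₂ n : ℝ):ℂ) := by push_cast; ring
          rw [he]
          calc ‖(s - 1) + ((1 - β₂ n:ℝ):ℂ)‖ ≤ ‖s-1‖ + ‖((1 - β₂ n:ℝ):ℂ)‖ := norm_add_le _ _
          _ ≤ δ + 3*t := by
              rw [Complex.norm_real, Real.norm_eq_abs]
              have h3a : |1 - β₂ n| ≤ 3*t := by
                rw [hβ2n]; exact (myArithAbs2 htpos ht4).2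
              linarith
        apply mySqrtBound (norm_nonneg _) (by positivity)
        rw [h1]
        calc ‖s - ((β₁ n:ℝ):ℂ)‖ * ‖s - ((β₂ n:ℝ):ℂ)‖
            ≤ (δ + 3*t) * (δ + 3*t) := mul_le_mul h2 h3 (norm_nonneg _) (by positivity)
        _ = (δ + 3*t)^2 := by ring
      calc ‖R n s - (s-1)‖ ≤ ‖R n s‖ + ‖s-1‖ := norm_sub_le _ _
      _ ≤ (δ + 3*t) + δ := by linarith
      _ = 2*δ + 3*t := by ring
    · have hbr := hbranch s hcase
      have hsq : ‖R n s - (s-1)‖^2 ≤ 2*t^2*(M+2) := by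
        have h1 : ‖R n s - (s-1)‖ * ‖R n s + (s-1)‖ ≤ 2*t^2*(‖s‖+2) := by
          rw [← norm_mul]; exact hE s
        have h2 : ‖R n s - (s-1)‖ * ‖R n s - (s-1)‖ ≤ ‖R n s - (s-1)‖ * ‖R n s + (s-1)‖ :=
          mul_le_mul_of_nonneg_left hbr.le (norm_nonneg _)
        have h3 : 2*t^2*(‖s‖+2) ≤ 2*t^2*(M+2) := myArithMono (by linarith)
        calc ‖R n s - (s-1)‖^2 = ‖R n s - (s-1)‖ * ‖R n s - (s-1)‖ := sq (‖R n s - (s-1)‖) ▸ by ring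
        _ ≤ 2*t^2*(M+2) := by linarith
      rw [hδdef]
      exact myArithCase2 (norm_nonneg _) hM1 htpos hsq
  have hbound : ∀ s ∈ segment ℝ ((w:ℝ):ℂ) z,
      ‖(R n s - (s-1))/(2*s)‖ ≤ (2*δ + 3*t)/(2*k) := by
    intro s hsseg
    obtain ⟨⟨hsS, hsk⟩, hsM⟩ := hsegmem s hsseg
    rw [norm_div]
    have h2s : ‖(2:ℂ)*s‖ = 2*‖s‖ := by
      rw [norm_mul]
      norm_num
    rw [h2s]
    exact div_le_div₀ (by positivity) (hCnum s hsseg) (by positivity) (by linarith)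
  have hmvt := (convex_segment ((w:ℝ):ℂ) z).norm_image_sub_le_of_norm_hasDerivWithin_le
      hder hbound (left_mem_segment ℝ _ _) (right_mem_segment ℝ _ _)
  -- conclude
  rw [dist_eq_norm]
  have hzw : ‖z - ((w:ℝ):ℂ)‖ ≤ M + 1 := by
    calc ‖z - ((w:ℝ):ℂ)‖ ≤ ‖z‖ + ‖((w:ℝ):ℂ)‖ := norm_sub_le _ _
    _ ≤ M + 1 := by
        rw [Complex.norm_real, Real.norm_eq_abs, abs_of_pos hw0]
        linarith
  have hterm1 : ((2*δ + 3*t)/(2*k)) * ‖z - ((w:ℝ):ℂ)‖ < ε/3 := by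
    have hC2t : ((2*δ + 3*t)/(2*k)) * (M+1) = C₂ * t := by
      rw [hC₂, hδdef]
      field_simp
    calc ((2*δ+3*t)/(2*k)) * ‖z - ((w:ℝ):ℂ)‖ ≤ ((2*δ+3*t)/(2*k)) * (M+1) :=
          mul_le_mul_of_nonneg_left hzw (by positivity)
    _ = C₂ * t := hC2t
    _ ≤ (C₂+1)*t := by
        have : C₂ * t ≤ C₂ * t + t := by linarith
        linarith [this]
    _ < ε/3 := by
        have h1 := (lt_div_iff₀ (by positivity : (0:ℝ) < C₂+1)).1 htε
        linarith
  have hkey : ψ z - φ n z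
      = -((φ n z - ψ z) - (φ n ((w:ℝ):ℂ) - ψ ((w:ℝ):ℂ))) + (ψ ((w:ℝ):ℂ) - φ n ((w:ℝ):ℂ)) := by
    ring
  calc ‖ψ z - φ n z‖
      = ‖-((φ n z - ψ z) - (φ n ((w:ℝ):ℂ) - ψ ((w:ℝ):ℂ))) + (ψ ((w:ℝ):ℂ) - φ n ((w:ℝ):ℂ))‖ := by
        rw [← hkey]
    _ ≤ ‖(φ n z - ψ z) - (φ n ((w:ℝ):ℂ) - ψ ((w:ℝ):ℂ))‖ + ‖ψ ((w:ℝ):ℂ) - φ n ((w:ℝ):ℂ)‖ := by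
        calc ‖_ + _‖ ≤ ‖-((φ n z - ψ z) - (φ n ((w:ℝ):ℂ) - ψ ((w:ℝ):ℂ)))‖
              + ‖ψ ((w:ℝ):ℂ) - φ n ((w:ℝ):ℂ)‖ := norm_add_le _ _
        _ = _ := by rw [norm_neg]
    _ ≤ ((2*δ + 3*t)/(2*k)) * ‖z - ((w:ℝ):ℂ)‖ + (‖ψ ((w:ℝ):ℂ)‖ + ‖φ n ((w:ℝ):ℂ)‖) := by
        have h2 := norm_sub_le (ψ ((w:ℝ):ℂ)) (φ n ((w:ℝ):ℂ))
        linarith [hmvt]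
    _ < ε/3 + (ε/3 + ε/3) := by linarith
    _ = ε := by ring
end

section
/- Let σ₃ = diag(1,-1), σ₊ = [[0,1],[0,0]], σ₋ = [[0,0],[1,0]]. For the matrices A(λ) = (λ + s + (Θ-K)/λ)σ₃ + y(1 - u/(2λ))σ₊ + (2/y)(K - Θ - Θ∞ + (K/(λu))(K-2Θ))σ₋ and B(λ) = λσ₃ + yσ₊ + (2/y)(K - Θ - Θ∞)σ₋, the zero-curvature (compatibility) condition ∂A/∂s - ∂B/∂λ + [A,B] = 0, imposed identically in λ, implies that u satisfies the Painlevé IV equation u'' = (u')²/(2u) + (3/2)u³ + 4su² + 2(s²+1-2Θ∞)u - 8Θ²/u, given the auxiliary relations y'/y = -u - 2s and K = (1/4)(-u' + u² + 2su + 4Θ). -/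
open Matrix

/-- The Jimbo–Miwa `A`-matrix of the Painlevé IV Lax pair. -/
noncomputable def pivA (Θ Θinf : ℝ) (u y K : ℝ → ℝ) (s l : ℝ) : Matrix (Fin 2) (Fin 2) ℝ :=
  !![l + s + (Θ - K s) / l, y s * (1 - u s / (2 * l));
     (2 / y s) * (K s - Θ - Θinf + (K s / (l * u s)) * (K s - 2 * Θ)),
       -(l + s + (Θ - K s) / l)]

/-- The Jimbo–Miwa `B`-matrix of the Painlevé IV Lax pair. -/
noncomputable def pivB (Θ Θinf : ℝ) (y K : ℝ → ℝ) (s l : ℝ) : Matrix (Fin 2) (Fin 2) ℝ :=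
  !![l, y s; (2 / y s) * (K s - Θ - Θinf), -l]

theorem lax_pair_compatibility_implies_pivIV (Θ Θinf : ℝ) (u y K : ℝ → ℝ)
    (hu : ContDiff ℝ 2 u) (hy : ContDiff ℝ 1 y) (hK : ContDiff ℝ 1 K)
    (hune : ∀ s, u s ≠ 0) (hyne : ∀ s, y s ≠ 0)
    (hlogy : ∀ s, deriv y s / y s = -(u s) - 2 * s)
    (hKdef : ∀ s, K s = (1 / 4) * (-(deriv u s) + u s ^ 2 + 2 * s * u s + 4 * Θ))
    (hcompat : ∀ (s l : ℝ), l ≠ 0 → ∀ i j : Fin 2,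
      deriv (fun t => pivA Θ Θinf u y K t l i j) s -
        deriv (fun m => pivB Θ Θinf y K s m i j) l +
        ((pivA Θ Θinf u y K s l * pivB Θ Θinf y K s l) i j -
          (pivB Θ Θinf y K s l * pivA Θ Θinf u y K s l) i j) = 0) :
    ∀ s : ℝ,
      deriv (deriv u) s =
        (deriv u s) ^ 2 / (2 * u s) + (3 / 2) * u s ^ 3 + 4 * s * u s ^ 2 +
          2 * (s ^ 2 + 1 - 2 * Θinf) * u s - 8 * Θ ^ 2 / u s := by
  intro s
  have hKd : Differentiable ℝ K := hK.differentiable one_ne_zero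
  have hud : Differentiable ℝ u := hu.differentiable (by norm_num)
  have hdud : Differentiable ℝ (deriv u) := by
    have h2 : ContDiff ℝ ((1 : WithTop ℕ∞) + 1) u := by norm_num; exact hu
    exact (contDiff_succ_iff_deriv.mp h2).2.2.differentiable one_ne_zero
  -- derivative of K from its definition
  have hKderiv : deriv K s = (1 / 4) * (-(deriv (deriv u) s) + 2 * u s * deriv u s
      + 2 * u s + 2 * s * deriv u s) := by
    have hfun : K = fun t => (1 / 4) * (-(deriv u t) + u t ^ 2 + 2 * t * u t + 4 * Θ) := by
      funext t; exact hKdef t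
    rw [hfun]
    have h1 : HasDerivAt (fun t => (1 / 4 : ℝ) * (-(deriv u t) + u t ^ 2 + 2 * t * u t + 4 * Θ))
        ((1 / 4) * (-(deriv (deriv u) s) + 2 * u s * deriv u s + 2 * u s + 2 * s * deriv u s)) s := by
      have hd1 : HasDerivAt (fun t => deriv u t) (deriv (deriv u) s) s := (hdud s).hasDerivAt
      have hd2 : HasDerivAt u (deriv u s) s := (hud s).hasDerivAt
      have : HasDerivAt (fun t => -(deriv u t) + u t ^ 2 + 2 * t * u t + 4 * Θ)
          (-(deriv (deriv u) s) + (2 * u s * deriv u s) + (2 * u s + 2 * s * deriv u s)) s := by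
        have hsq : HasDerivAt (fun t => u t ^ 2) (2 * u s * deriv u s) s := by
          refine (hd2.pow 2).congr_deriv ?_
          norm_num [mul_comm]
        have hlin : HasDerivAt (fun t => 2 * t * u t) (2 * u s + 2 * s * deriv u s) s := by
          have := (((hasDerivAt_id s).const_mul 2).mul hd2)
          refine this.congr_deriv ?_
          simp
        exact ((hd1.neg.add hsq).add hlin).add_const (4 * Θ)
      simpa [mul_add, add_assoc] using this.const_mul (1 / 4 : ℝ)
    exact h1.deriv
  -- the (0,0) compatibility equation at l = 1
  have h1 : deriv (fun t => pivA Θ Θinf u y K t 1 0 0) s = 1 - deriv K s := by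
    have heq : (fun t => pivA Θ Θinf u y K t 1 0 0) = fun t => 1 + t + (Θ - K t) := by
      funext t; simp [pivA]
    rw [heq]
    have : HasDerivAt (fun t => 1 + t + (Θ - K t)) (1 - deriv K s) s := by
      refine (((hasDerivAt_id s).const_add 1).add ((hKd s).hasDerivAt.const_sub Θ)).congr_deriv ?_
      ring
    exact this.deriv
  have h2 : deriv (fun m => pivB Θ Θinf y K s m 0 0) 1 = 1 := by
    have heq : (fun m => pivB Θ Θinf y K s m 0 0) = fun m => m := by
      funext m; simp [pivB]
    rw [heq]
    exact (hasDerivAt_id (1 : ℝ)).deriv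
  have E := hcompat s 1 one_ne_zero 0 0
  rw [h1, h2] at E
  simp only [pivA, pivB, Matrix.mul_apply, Fin.sum_univ_two, Matrix.cons_val', Matrix.cons_val_zero,
    Matrix.cons_val_one, Matrix.head_cons, Matrix.head_fin_const, Matrix.empty_val',
    Matrix.cons_val_fin_one, Matrix.of_apply] at E
  -- clean polynomial form of the (0,0) equation
  have E1 : u s * deriv K s = -(u s ^ 2) * (K s - Θ - Θinf) - 2 * K s * (K s - 2 * Θ) := by
    field_simp [hune s, hyne s] at E
    have hy2 : (2 : ℝ) * y s ^ 2 ≠ 0 := mul_ne_zero two_ne_zero (pow_ne_zero 2 (hyne s))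
    have E2 : (2 * y s ^ 2) * (u s * deriv K s + u s ^ 2 * (K s - Θ - Θinf)
        + 2 * K s * (K s - 2 * Θ)) = 0 := by linear_combination (-2 * y s ^ 2) * E
    have E3 := (mul_eq_zero.mp E2).resolve_left hy2
    linarith [E3]
  rw [hKderiv, hKdef s] at E1
  have key : 2 * u s * deriv (deriv u) s =
      (deriv u s) ^ 2 + 3 * u s ^ 4 + 8 * s * u s ^ 3 + 4 * (s ^ 2 + 1 - 2 * Θinf) * u s ^ 2
        - 16 * Θ ^ 2 := by
    linear_combination (-8 : ℝ) * E1
  have hu2 : (2 : ℝ) * u s ≠ 0 := mul_ne_zero two_ne_zero (hune s)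
  field_simp [hune s]
  linear_combination key
end
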